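/- Let Ω = (0,1)² be uniformly partitioned into N² congruent squares. For every piecewise-polynomial vector field v = (v₁, v₂) in the displacement space V_k(𝒯_h) there exists a symmetric tensor field τ = diag(τ₁₁, τ₂₂) ∈ H(div, Ω, 𝕊) with τ₁₁(x,y) = ∫₀^x v₁(t,y) dt and τ₂₂(x,y) = ∫₀^y v₂(x,t) dt, such that div τ = v and ‖τ‖²_{H(div,Ω)} ≤ (3/2) ‖v‖²_{L²(Ω)}. -/

import Mathlib

open intervalIntegral MvPolynomial

/-- Evaluation of a bivariate polynomial (variable `0` is `x`, variable `1` is `y`). -/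
noncomputable def ev2 (p : MvPolynomial (Fin 2) ℝ) (x y : ℝ) : ℝ :=
  MvPolynomial.eval ![x, y] p

/-- Open `i`-th subinterval of `(0,1)` for the uniform partition into `N` intervals. -/
def Ix (N i : ℕ) : Set ℝ := Set.Ioo ((i : ℝ) / N) ((i + 1 : ℝ) / N)

/-- Local displacement space `V_k(K) = (P_{k-1})² ⊕ span{(x^k,0),(0,y^k),(xy^{k-1},0),(0,x^{k-1}y)}`. -/
def memVk (k : ℕ) (q1 q2 : MvPolynomial (Fin 2) ℝ) : Prop :=
  ∃ p1 p2 : MvPolynomial (Fin 2) ℝ, ∃ a b c d : ℝ,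
    p1.totalDegree ≤ k - 1 ∧ p2.totalDegree ≤ k - 1 ∧
    q1 = p1 + MvPolynomial.C a * X 0 ^ k + MvPolynomial.C b * X 0 * X 1 ^ (k - 1) ∧
    q2 = p2 + MvPolynomial.C c * X 1 ^ k + MvPolynomial.C d * X 0 ^ (k - 1) * X 1

/-- Membership of `(v₁,v₂)` in the global displacement space `V_k(𝒯_h)` on the uniform
`N × N` mesh of the unit square. -/
def meshVk (k N : ℕ) (v1 v2 : ℝ → ℝ → ℝ) : Prop :=
  ∀ i j : ℕ, i < N → j < N → ∃ q1 q2 : MvPolynomial (Fin 2) ℝ, memVk k q1 q2 ∧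
    ∀ x y : ℝ, x ∈ Ix N i → y ∈ Ix N j → v1 x y = ev2 q1 x y ∧ v2 x y = ev2 q2 x y

open MeasureTheory Set

-- helper: a.e. equality from equality off a finite set
lemma aeEq_of_offFinite {f g : ℝ → ℝ} {s : Set ℝ} (hs : s.Finite)
    (h : ∀ x ∉ s, f x = g x) : f =ᵐ[volume] g := by
  have h0 : volume s = 0 := hs.measure_zero _
  refine measure_mono_null ?_ h0
  intro x hx
  simp only [Set.mem_setOf_eq, Set.mem_compl_iff] at hx ⊢
  by_contra hxs
  exact hx (h x hxs)

lemma intervalIntegral_congr_offFinite {f g : ℝ → ℝ} {s : Set ℝ} (hs : s.Finite)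
    (h : ∀ x ∉ s, f x = g x) (a b : ℝ) :
    ∫ t in a..b, f t = ∫ t in a..b, g t := by
  apply intervalIntegral.integral_congr_ae
  filter_upwards [aeEq_of_offFinite hs h] with x hx _ using hx

-- bounded measurable on [whatever] interval integrable
lemma intervalIntegrable_of_bdd {f : ℝ → ℝ} (hf : Measurable f) {M : ℝ}
    (hM : ∀ x, |f x| ≤ M) (a b : ℝ) : IntervalIntegrable f volume a b := by
  refine (_root_.intervalIntegrable_const (c := M)).mono_fun
    hf.aestronglyMeasurable.restrict ?_
  filter_upwards with x
  simpa [Real.norm_eq_abs] using (hM x).trans (le_abs_self M)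

-- Cauchy–Schwarz for primitives of bounded measurable functions
lemma sq_intervalIntegral_le {f : ℝ → ℝ} (hf : Measurable f) {M : ℝ}
    (hM : ∀ t, |f t| ≤ M) {x : ℝ} (hx0 : 0 ≤ x) (hx1 : x ≤ 1) :
    (∫ t in (0:ℝ)..x, f t) ^ 2 ≤ x * ∫ t in (0:ℝ)..1, (f t) ^ 2 := by
  have hMnn : 0 ≤ M := le_trans (abs_nonneg _) (hM 0)
  have hconst : ∀ (c : ℝ) (u : ℝ), IntegrableOn (fun _ : ℝ => c) (Ioc (0:ℝ) u) volume := by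
    intro c u
    exact integrableOn_const (by simp [Real.volume_Ioc])
  have hfi : ∀ u : ℝ, IntegrableOn f (Ioc (0:ℝ) u) volume := by
    intro u
    refine (hconst M u).mono' hf.aestronglyMeasurable.restrict ?_
    filter_upwards with t using by simpa [Real.norm_eq_abs] using hM t
  have hf2 : Measurable fun t => (f t) ^ 2 := hf.pow_const 2
  have hM2 : ∀ t, |(f t) ^ 2| ≤ M ^ 2 := by
    intro t
    rw [abs_pow]
    exact pow_le_pow_left₀ (abs_nonneg _) (hM t) 2
  have hf2i : ∀ u : ℝ, IntegrableOn (fun t => (f t) ^ 2) (Ioc (0:ℝ) u) volume := by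
    intro u
    refine (hconst (M ^ 2) u).mono' hf2.aestronglyMeasurable.restrict ?_
    filter_upwards with t using by simpa [Real.norm_eq_abs] using hM2 t
  rw [intervalIntegral.integral_of_le hx0, intervalIntegral.integral_of_le (zero_le_one)]
  set s : Set ℝ := Ioc (0:ℝ) x with hs
  set A : ℝ := ∫ t in s, f t with hA
  set B : ℝ := ∫ t in s, (f t) ^ 2 with hB
  set C : ℝ := ∫ t in Ioc (0:ℝ) 1, (f t) ^ 2 with hC
  have hCnn : 0 ≤ C := integral_nonneg fun t => sq_nonneg _
  rcases eq_or_lt_of_le hx0 with h0 | hxpos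
  · have : A = 0 := by
      rw [hA, hs, ← h0]
      simp
    rw [this, ← h0]
    simp
  have hμs : (volume s).toReal = x := by
    rw [hs, Real.volume_Ioc]
    simp [hx0]
  have key : 0 ≤ x ^ 2 * B - x * A ^ 2 := by
    have h0 : (0:ℝ) ≤ ∫ t in s, (x * f t - A) ^ 2 :=
      integral_nonneg fun t => sq_nonneg _
    have hexp : (fun t => (x * f t - A) ^ 2)
        = fun t => x ^ 2 * (f t) ^ 2 - (2 * x * A) * f t + A ^ 2 := by
      ext t; ring
    have hint1 : IntegrableOn (fun t => x ^ 2 * (f t) ^ 2) s volume := (hf2i x).const_mul _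
    have hint2 : IntegrableOn (fun t => (2 * x * A) * f t) s volume := (hfi x).const_mul _
    have : ∫ t in s, (x * f t - A) ^ 2
        = x ^ 2 * B - (2 * x * A) * A + A ^ 2 * x := by
      have hint12 : IntegrableOn (fun t => x ^ 2 * (f t) ^ 2 - (2 * x * A) * f t) s volume :=
        hint1.sub hint2
      rw [hexp, integral_add hint12 (hconst (A ^ 2) x),
        integral_sub hint1 hint2, MeasureTheory.integral_const_mul, MeasureTheory.integral_const_mul,
        setIntegral_const, measureReal_def, hμs, smul_eq_mul, mul_comm, ← hA, ← hB]
      ring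
    nlinarith [h0, this]
  have hBC : B ≤ C := by
    refine setIntegral_mono_set (hf2i 1) ?_ ?_
    · filter_upwards with t using sq_nonneg _
    · exact HasSubset.Subset.eventuallyLE (Set.Ioc_subset_Ioc_right hx1)
  nlinarith [key, hxpos, hBC]

-- the grid
def gridSet (N : ℕ) : Set ℝ := {x : ℝ | ∃ i ≤ N, x = (i : ℝ) / N}

lemma gridSet_finite (N : ℕ) : (gridSet N).Finite := by
  have : gridSet N = (fun i : ℕ => (i : ℝ) / N) '' (Set.Iic N) := by
    ext x
    simp [gridSet, Set.mem_image, eq_comm]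
  rw [this]
  exact (Set.finite_Iic N).image _

lemma offgrid_mem {N : ℕ} (hN : 0 < N) {x : ℝ} (hx : x ∈ Ioc (0:ℝ) 1)
    (hxg : x ∉ gridSet N) : ∃ i < N, x ∈ Ix N i := by
  have hNR : (0:ℝ) < N := by exact_mod_cast hN
  obtain ⟨hx0, hx1⟩ := hx
  have hx1' : x < 1 := by
    rcases lt_or_eq_of_le hx1 with h | h
    · exact h
    · exact absurd ⟨N, le_rfl, by rw [h]; field_simp⟩ hxg
  have hxN : 0 ≤ x * N := by positivity
  refine ⟨⌊x * N⌋₊, ?_, ?_, ?_⟩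
  · rw [Nat.floor_lt hxN]
    nlinarith
  · rcases lt_or_eq_of_le ((div_le_iff₀ hNR).2 ((Nat.floor_le hxN).trans_eq rfl)) with h | h
    · exact h
    · exfalso
      apply hxg
      refine ⟨⌊x * N⌋₊, ?_, h.symm⟩
      have hle : x * N ≤ (N:ℝ) := by nlinarith
      calc ⌊x * ↑N⌋₊ ≤ ⌊(N:ℝ)⌋₊ := Nat.floor_le_floor hle
        _ = N := Nat.floor_natCast N
  · rw [lt_div_iff₀ hNR]
    push_cast
    exact Nat.lt_floor_add_one (x * N)

lemma Ix_disjoint {N i i' : ℕ} (hN : 0 < N) {x : ℝ} (hx : x ∈ Ix N i)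
    (hx' : x ∈ Ix N i') : i = i' := by
  have hNR : (0:ℝ) < N := by exact_mod_cast hN
  obtain ⟨h1, h2⟩ := hx
  obtain ⟨h3, h4⟩ := hx'
  have e1 : (i : ℝ) < i' + 1 := by
    have := h1.trans h4
    rw [div_lt_div_iff₀ hNR hNR] at this
    nlinarith
  have e2 : (i' : ℝ) < i + 1 := by
    have := h3.trans h2
    rw [div_lt_div_iff₀ hNR hNR] at this
    nlinarith
  have : i < i' + 1 := by exact_mod_cast e1
  have : i' < i + 1 := by exact_mod_cast e2
  omega

lemma Ix_subset {N i : ℕ} (hN : 0 < N) (hi : i < N) {x : ℝ} (hx : x ∈ Ix N i) :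
    x ∈ Ioc (0:ℝ) 1 := by
  have hNR : (0:ℝ) < N := by exact_mod_cast hN
  obtain ⟨h1, h2⟩ := hx
  constructor
  · exact lt_of_le_of_lt (by positivity) h1
  · have : ((i:ℝ) + 1) / N ≤ 1 := by
      rw [div_le_one hNR]
      exact_mod_cast hi
    exact le_of_lt (h2.trans_le this)

open scoped Classical in
noncomputable def Wfun (N : ℕ) (q : ℕ → ℕ → MvPolynomial (Fin 2) ℝ) (x y : ℝ) : ℝ :=
  ∑ i ∈ Finset.range N, ∑ j ∈ Finset.range N,
    if x ∈ Ix N i ∧ y ∈ Ix N j then ev2 (q i j) x y else 0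

lemma continuous_ev2 (p : MvPolynomial (Fin 2) ℝ) :
    Continuous fun z : ℝ × ℝ => ev2 p z.1 z.2 := by
  apply (MvPolynomial.continuous_eval (p := p)).comp
  apply continuous_pi
  intro i
  fin_cases i
  · simpa using continuous_fst
  · simpa using continuous_snd

lemma Wfun_eq {N : ℕ} (hN : 0 < N) (q : ℕ → ℕ → MvPolynomial (Fin 2) ℝ)
    {i j : ℕ} (hi : i < N) (hj : j < N) {x y : ℝ} (hx : x ∈ Ix N i) (hy : y ∈ Ix N j) :
    Wfun N q x y = ev2 (q i j) x y := by
  unfold Wfun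
  rw [Finset.sum_eq_single i]
  · rw [Finset.sum_eq_single j]
    · simp [hx, hy]
    · intro j' _ hj'
      rw [if_neg]
      rintro ⟨-, hy'⟩
      exact hj' (Ix_disjoint hN hy' hy)
    · intro h
      exact absurd (Finset.mem_range.2 hj) h
  · intro i' _ hi'
    apply Finset.sum_eq_zero
    intro j' _
    rw [if_neg]
    rintro ⟨hx', -⟩
    exact hi' (Ix_disjoint hN hx' hx)
  · intro h
    exact absurd (Finset.mem_range.2 hi) h

lemma Wfun_measurable (N : ℕ) (q : ℕ → ℕ → MvPolynomial (Fin 2) ℝ) :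
    Measurable fun z : ℝ × ℝ => Wfun N q z.1 z.2 := by
  unfold Wfun
  apply Finset.measurable_sum
  intro i _
  apply Finset.measurable_sum
  intro j _
  have hset : MeasurableSet {z : ℝ × ℝ | z.1 ∈ Ix N i ∧ z.2 ∈ Ix N j} := by
    have : {z : ℝ × ℝ | z.1 ∈ Ix N i ∧ z.2 ∈ Ix N j} = (Ix N i) ×ˢ (Ix N j) := rfl
    rw [this]
    exact (measurableSet_Ioo.prod measurableSet_Ioo)
  exact Measurable.ite hset (continuous_ev2 (q i j)).measurable measurable_const

lemma Wfun_bdd (N : ℕ) (hN : 0 < N) (q : ℕ → ℕ → MvPolynomial (Fin 2) ℝ) :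
    ∃ M : ℝ, ∀ x y : ℝ, |Wfun N q x y| ≤ M := by
  have hK : IsCompact ((Icc (0:ℝ) 1) ×ˢ (Icc (0:ℝ) 1)) :=
    isCompact_Icc.prod isCompact_Icc
  have hC : ∀ i j : ℕ, ∃ C : ℝ, ∀ z ∈ (Icc (0:ℝ) 1) ×ˢ (Icc (0:ℝ) 1),
      |ev2 (q i j) z.1 z.2| ≤ C := by
    intro i j
    obtain ⟨C, hC⟩ := hK.exists_bound_of_continuousOn (continuous_ev2 (q i j)).continuousOn
    exact ⟨C, fun z hz => by simpa [Real.norm_eq_abs] using hC z hz⟩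
  choose C hC using hC
  refine ⟨∑ i ∈ Finset.range N, ∑ j ∈ Finset.range N, max (C i j) 0, fun x y => ?_⟩
  unfold Wfun
  refine (Finset.abs_sum_le_sum_abs _ _).trans (Finset.sum_le_sum fun i hi => ?_)
  refine (Finset.abs_sum_le_sum_abs _ _).trans (Finset.sum_le_sum fun j hj => ?_)
  by_cases h : x ∈ Ix N i ∧ y ∈ Ix N j
  · rw [if_pos h]
    refine le_trans ?_ (le_max_left _ _)
    have hxm := Ix_subset hN (Finset.mem_range.1 hi) h.1
    have hym := Ix_subset hN (Finset.mem_range.1 hj) h.2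
    exact hC i j (x, y) ⟨Ioc_subset_Icc_self hxm, Ioc_subset_Icc_self hym⟩
  · rw [if_neg h]
    simp

lemma indicator_SM {W : ℝ × ℝ → ℝ} (hW : Measurable W) :
    StronglyMeasurable fun p : (ℝ × ℝ) × ℝ =>
      (Ioc (0:ℝ) p.1.1).indicator (fun s => W (s, p.1.2)) p.2 := by
  have heq : (fun p : (ℝ × ℝ) × ℝ =>
      (Ioc (0:ℝ) p.1.1).indicator (fun s => W (s, p.1.2)) p.2)
      = Set.indicator {p : (ℝ × ℝ) × ℝ | 0 < p.2 ∧ p.2 ≤ p.1.1}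
          (fun p => W (p.2, p.1.2)) := by
    funext p
    simp [Set.indicator_apply, Set.mem_Ioc, Set.mem_setOf_eq]
  rw [heq]
  have hset : MeasurableSet {p : (ℝ × ℝ) × ℝ | 0 < p.2 ∧ p.2 ≤ p.1.1} := by
    apply MeasurableSet.inter
    · exact measurableSet_lt measurable_const measurable_snd
    · exact measurableSet_le measurable_snd (measurable_fst.fst)
  exact ((hW.comp ((measurable_snd).prodMk measurable_fst.snd)).indicator hset).stronglyMeasurable

lemma T1_SM {W : ℝ × ℝ → ℝ} (hW : Measurable W) :
    StronglyMeasurable fun z : ℝ × ℝ =>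
      ∫ t in Ioc (0:ℝ) 1, (Ioc (0:ℝ) z.1).indicator (fun s => W (s, z.2)) t := by
  exact (indicator_SM hW).integral_prod_right'

lemma T1_eq_intervalIntegral {W : ℝ × ℝ → ℝ} {x y : ℝ} (hx0 : 0 ≤ x) (hx1 : x ≤ 1) :
    (∫ t in Ioc (0:ℝ) 1, (Ioc (0:ℝ) x).indicator (fun s => W (s, y)) t)
      = ∫ t in (0:ℝ)..x, W (t, y) := by
  rw [setIntegral_indicator measurableSet_Ioc, intervalIntegral.integral_of_le hx0,
    Set.Ioc_inter_Ioc]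
  simp [hx1, max_self]

lemma integrableOn_Ioc01_of_bdd {f : ℝ → ℝ}
    (hf : AEStronglyMeasurable f (volume.restrict (Ioc (0:ℝ) 1))) {c : ℝ}
    (hc : ∀ y ∈ Ioc (0:ℝ) 1, |f y| ≤ c) : IntegrableOn f (Ioc (0:ℝ) 1) volume := by
  have hconst : IntegrableOn (fun _ : ℝ => c) (Ioc (0:ℝ) 1) volume := by
    exact integrableOn_const (by simp [Real.volume_Ioc])
  refine hconst.mono' hf ?_
  filter_upwards [ae_restrict_mem measurableSet_Ioc] with y hy
  simpa [Real.norm_eq_abs] using hc y hy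

lemma core_ineq {W1 W2 : ℝ × ℝ → ℝ} (h1 : Measurable W1) (h2 : Measurable W2)
    {M1 M2 : ℝ} (hM1 : ∀ z, |W1 z| ≤ M1) (hM2 : ∀ z, |W2 z| ≤ M2) :
    (∫ x in (0:ℝ)..1, ∫ y in (0:ℝ)..1,
        ((∫ t in (0:ℝ)..x, W1 (t, y)) ^ 2 + (∫ t in (0:ℝ)..y, W2 (x, t)) ^ 2))
      ≤ (1 / 2) * ∫ x in (0:ℝ)..1, ∫ y in (0:ℝ)..1, (W1 (x, y) ^ 2 + W2 (x, y) ^ 2) := by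
  have hM1nn : 0 ≤ M1 := (abs_nonneg _).trans (hM1 0)
  have hM2nn : 0 ≤ M2 := (abs_nonneg _).trans (hM2 0)
  haveI instD : IsFiniteMeasure (volume.restrict (Ioc (0:ℝ) 1)) :=
    ⟨by rw [Measure.restrict_apply_univ]; simp [Real.volume_Ioc]⟩
  -- squares bounded
  have hsq : ∀ (a c : ℝ), |a| ≤ c → a ^ 2 ≤ c ^ 2 := by
    intro a c hac
    rw [← sq_abs]
    exact pow_le_pow_left₀ (abs_nonneg a) hac 2
  -- the L functions
  set L1 : ℝ → ℝ := fun y => ∫ t in Ioc (0:ℝ) 1, W1 (t, y) ^ 2 with hL1def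
  set L2 : ℝ → ℝ := fun x => ∫ t in Ioc (0:ℝ) 1, W2 (x, t) ^ 2 with hL2def
  set C1 : ℝ := ∫ y in Ioc (0:ℝ) 1, L1 y with hC1def
  set C2 : ℝ := ∫ x in Ioc (0:ℝ) 1, L2 x with hC2def
  have hL1m : StronglyMeasurable L1 :=
    (((h1.comp measurable_swap).pow_const 2).stronglyMeasurable).integral_prod_right'
  have hL2m : StronglyMeasurable L2 :=
    ((h2.pow_const 2).stronglyMeasurable).integral_prod_right'
  have hL1nn : ∀ y, 0 ≤ L1 y := fun y => integral_nonneg fun t => sq_nonneg _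
  have hL2nn : ∀ x, 0 ≤ L2 x := fun x => integral_nonneg fun t => sq_nonneg _
  have hDlt : volume (Ioc (0:ℝ) 1) < ⊤ := by simp [Real.volume_Ioc]
  have hDone : (volume (Ioc (0:ℝ) 1)).toReal = 1 := by simp [Real.volume_Ioc]
  have hL1b : ∀ y, L1 y ≤ M1 ^ 2 := by
    intro y
    have h := norm_setIntegral_le_of_norm_le_const (μ := volume)
      (f := fun t => W1 (t, y) ^ 2) (C := M1 ^ 2) hDlt ?_
    · rw [measureReal_def, hDone, mul_one, Real.norm_eq_abs] at h
      exact (le_abs_self _).trans h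
    · intro t _
      beta_reduce
      rw [Real.norm_eq_abs, abs_of_nonneg (sq_nonneg _)]
      exact hsq _ _ (hM1 (t, y))
  have hL2b : ∀ x, L2 x ≤ M2 ^ 2 := by
    intro x
    have h := norm_setIntegral_le_of_norm_le_const (μ := volume)
      (f := fun t => W2 (x, t) ^ 2) (C := M2 ^ 2) hDlt ?_
    · rw [measureReal_def, hDone, mul_one, Real.norm_eq_abs] at h
      exact (le_abs_self _).trans h
    · intro t _
      beta_reduce
      rw [Real.norm_eq_abs, abs_of_nonneg (sq_nonneg _)]
      exact hsq _ _ (hM2 (x, t))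
  -- Cauchy-Schwarz bounds
  have hCS1 : ∀ y : ℝ, ∀ x : ℝ, 0 ≤ x → x ≤ 1 →
      (∫ t in (0:ℝ)..x, W1 (t, y)) ^ 2 ≤ x * L1 y := by
    intro y x hx0 hx1
    have := sq_intervalIntegral_le (f := fun t => W1 (t, y))
      (h1.comp (measurable_id.prodMk measurable_const)) (fun t => hM1 (t, y)) hx0 hx1
    rwa [intervalIntegral.integral_of_le zero_le_one] at this
  have hCS2 : ∀ x : ℝ, ∀ y : ℝ, 0 ≤ y → y ≤ 1 →
      (∫ t in (0:ℝ)..y, W2 (x, t)) ^ 2 ≤ y * L2 x := by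
    intro x y hy0 hy1
    have := sq_intervalIntegral_le (f := fun t => W2 (x, t))
      (h2.comp (measurable_const.prodMk measurable_id)) (fun t => hM2 (x, t)) hy0 hy1
    rwa [intervalIntegral.integral_of_le zero_le_one] at this
  -- bounds on the primitives
  have hT1b : ∀ x : ℝ, x ∈ Icc (0:ℝ) 1 → ∀ y, |∫ t in (0:ℝ)..x, W1 (t, y)| ≤ M1 := by
    intro x hx y
    have := intervalIntegral.norm_integral_le_of_norm_le_const
      (C := M1) (f := fun t => W1 (t, y)) (a := 0) (b := x)
      (fun t _ => by simpa [Real.norm_eq_abs] using hM1 (t, y))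
    rw [Real.norm_eq_abs] at this
    refine this.trans ?_
    rw [sub_zero, abs_of_nonneg hx.1]
    nlinarith [hx.2, hM1nn]
  have hT2b : ∀ y : ℝ, y ∈ Icc (0:ℝ) 1 → ∀ x, |∫ t in (0:ℝ)..y, W2 (x, t)| ≤ M2 := by
    intro y hy x
    have := intervalIntegral.norm_integral_le_of_norm_le_const
      (C := M2) (f := fun t => W2 (x, t)) (a := 0) (b := y)
      (fun t _ => by simpa [Real.norm_eq_abs] using hM2 (x, t))
    rw [Real.norm_eq_abs] at this
    refine this.trans ?_
    rw [sub_zero, abs_of_nonneg hy.1]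
    nlinarith [hy.2, hM2nn]
  -- the jointly measurable versions of the primitives
  have hT1m : Measurable fun z : ℝ × ℝ =>
      ∫ t in Ioc (0:ℝ) 1, (Ioc (0:ℝ) z.1).indicator (fun s => W1 (s, z.2)) t :=
    (T1_SM h1).measurable
  have hT2m : Measurable fun z : ℝ × ℝ =>
      ∫ t in Ioc (0:ℝ) 1, (Ioc (0:ℝ) z.2).indicator (fun s => W2 (z.1, s)) t := by
    have := ((T1_SM (h2.comp measurable_swap)).measurable).comp measurable_swap
    exact this
  have hΦm : Measurable fun z : ℝ × ℝ =>
      (∫ t in Ioc (0:ℝ) 1, (Ioc (0:ℝ) z.1).indicator (fun s => W1 (s, z.2)) t) ^ 2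
      + (∫ t in Ioc (0:ℝ) 1, (Ioc (0:ℝ) z.2).indicator (fun s => W2 (z.1, s)) t) ^ 2 :=
    (hT1m.pow_const 2).add (hT2m.pow_const 2)
  -- pointwise identification of Φ with the primitives on the square
  have hΦeq : ∀ x ∈ Icc (0:ℝ) 1, ∀ y ∈ Icc (0:ℝ) 1,
      ((∫ t in Ioc (0:ℝ) 1, (Ioc (0:ℝ) x).indicator (fun s => W1 (s, y)) t) ^ 2
        + (∫ t in Ioc (0:ℝ) 1, (Ioc (0:ℝ) y).indicator (fun s => W2 (x, s)) t) ^ 2)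
      = (∫ t in (0:ℝ)..x, W1 (t, y)) ^ 2 + (∫ t in (0:ℝ)..y, W2 (x, t)) ^ 2 := by
    intro x hx y hy
    rw [T1_eq_intervalIntegral hx.1 hx.2,
      T1_eq_intervalIntegral (W := fun z : ℝ × ℝ => W2 (z.2, z.1)) hy.1 hy.2]
  -- inner inequality
  have key_inner : ∀ x ∈ Ioc (0:ℝ) 1,
      (∫ y in Ioc (0:ℝ) 1,
        ((∫ t in (0:ℝ)..x, W1 (t, y)) ^ 2 + (∫ t in (0:ℝ)..y, W2 (x, t)) ^ 2))
      ≤ x * C1 + L2 x * (1 / 2) := by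
    intro x hx
    have hx' : x ∈ Icc (0:ℝ) 1 := ⟨le_of_lt hx.1, hx.2⟩
    have hfa : AEStronglyMeasurable
        (fun y => (∫ t in (0:ℝ)..x, W1 (t, y)) ^ 2 + (∫ t in (0:ℝ)..y, W2 (x, t)) ^ 2)
        (volume.restrict (Ioc (0:ℝ) 1)) := by
      refine ((hΦm.comp ((measurable_const.prodMk measurable_id : Measurable fun y : ℝ => (x, y)))).aestronglyMeasurable).congr ?_
      filter_upwards [ae_restrict_mem measurableSet_Ioc] with y hy
      exact hΦeq x hx' y ⟨le_of_lt hy.1, hy.2⟩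
    have hfi : IntegrableOn
        (fun y => (∫ t in (0:ℝ)..x, W1 (t, y)) ^ 2 + (∫ t in (0:ℝ)..y, W2 (x, t)) ^ 2)
        (Ioc (0:ℝ) 1) volume := by
      refine integrableOn_Ioc01_of_bdd hfa (c := M1 ^ 2 + M2 ^ 2) ?_
      intro y hy
      have b1 := hsq _ _ (hT1b x hx' y)
      have b2 := hsq _ _ (hT2b y ⟨le_of_lt hy.1, hy.2⟩ x)
      beta_reduce
      rw [abs_of_nonneg (by positivity)]
      linarith
    have hL1i : IntegrableOn L1 (Ioc (0:ℝ) 1) volume :=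
      integrableOn_Ioc01_of_bdd hL1m.aestronglyMeasurable.restrict
        (c := M1 ^ 2) (fun y _ => by rw [abs_of_nonneg (hL1nn y)]; exact hL1b y)
    have hyc : IntegrableOn (fun y : ℝ => y * L2 x) (Ioc (0:ℝ) 1) volume := by
      exact (continuous_id.mul continuous_const).integrableOn_Ioc
    have hgi : IntegrableOn (fun y => x * L1 y + y * L2 x) (Ioc (0:ℝ) 1) volume :=
      Integrable.add (hL1i.const_mul x) hyc
    calc (∫ y in Ioc (0:ℝ) 1,
          ((∫ t in (0:ℝ)..x, W1 (t, y)) ^ 2 + (∫ t in (0:ℝ)..y, W2 (x, t)) ^ 2))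
        ≤ ∫ y in Ioc (0:ℝ) 1, (x * L1 y + y * L2 x) := by
          refine setIntegral_mono_on hfi hgi measurableSet_Ioc ?_
          intro y hy
          have b1 := hCS1 y x hx'.1 hx'.2
          have b2 := hCS2 x y (le_of_lt hy.1) hy.2
          linarith
      _ = x * C1 + L2 x * (1 / 2) := by
          rw [integral_add (hL1i.const_mul x) hyc,
            MeasureTheory.integral_const_mul, MeasureTheory.integral_mul_const]
          congr 1
          have : ∫ y in Ioc (0:ℝ) 1, y = 1 / 2 := by
            rw [← intervalIntegral.integral_of_le zero_le_one, integral_id]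
            norm_num
          rw [this]
          ring
  -- outer integrability of the inner integral
  have hinnerm : AEStronglyMeasurable
      (fun x => ∫ y in Ioc (0:ℝ) 1,
        ((∫ t in (0:ℝ)..x, W1 (t, y)) ^ 2 + (∫ t in (0:ℝ)..y, W2 (x, t)) ^ 2))
      (volume.restrict (Ioc (0:ℝ) 1)) := by
    have hsm : StronglyMeasurable fun x : ℝ => ∫ y in Ioc (0:ℝ) 1,
        ((∫ t in Ioc (0:ℝ) 1, (Ioc (0:ℝ) x).indicator (fun s => W1 (s, y)) t) ^ 2
          + (∫ t in Ioc (0:ℝ) 1, (Ioc (0:ℝ) y).indicator (fun s => W2 (x, s)) t) ^ 2) :=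
      hΦm.stronglyMeasurable.integral_prod_right'
    refine hsm.aestronglyMeasurable.restrict.congr ?_
    filter_upwards [ae_restrict_mem measurableSet_Ioc] with x hx
    refine setIntegral_congr_fun measurableSet_Ioc fun y hy => ?_
    exact hΦeq x ⟨le_of_lt hx.1, hx.2⟩ y ⟨le_of_lt hy.1, hy.2⟩
  have hinneri : IntegrableOn
      (fun x => ∫ y in Ioc (0:ℝ) 1,
        ((∫ t in (0:ℝ)..x, W1 (t, y)) ^ 2 + (∫ t in (0:ℝ)..y, W2 (x, t)) ^ 2))
      (Ioc (0:ℝ) 1) volume := by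
    refine integrableOn_Ioc01_of_bdd hinnerm (c := M1 ^ 2 + M2 ^ 2) ?_
    intro x hx
    have := norm_setIntegral_le_of_norm_le_const (μ := volume) hDlt
      (C := M1 ^ 2 + M2 ^ 2)
      (f := fun y => (∫ t in (0:ℝ)..x, W1 (t, y)) ^ 2 + (∫ t in (0:ℝ)..y, W2 (x, t)) ^ 2)
      (fun y hy => by
        have b1 := hsq _ _ (hT1b x ⟨le_of_lt hx.1, hx.2⟩ y)
        have b2 := hsq _ _ (hT2b y ⟨le_of_lt hy.1, hy.2⟩ x)
        beta_reduce
        rw [Real.norm_eq_abs, abs_of_nonneg (by positivity)]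
        linarith)
    rw [measureReal_def, hDone, mul_one, Real.norm_eq_abs] at this
    exact this
  have hL2i : IntegrableOn L2 (Ioc (0:ℝ) 1) volume :=
    integrableOn_Ioc01_of_bdd hL2m.aestronglyMeasurable.restrict
      (c := M2 ^ 2) (fun x _ => by rw [abs_of_nonneg (hL2nn x)]; exact hL2b x)
  -- outer inequality
  have key_outer :
      (∫ x in Ioc (0:ℝ) 1, ∫ y in Ioc (0:ℝ) 1,
        ((∫ t in (0:ℝ)..x, W1 (t, y)) ^ 2 + (∫ t in (0:ℝ)..y, W2 (x, t)) ^ 2))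
      ≤ (1 / 2) * C1 + (1 / 2) * C2 := by
    have hxc : IntegrableOn (fun x : ℝ => x * C1) (Ioc (0:ℝ) 1) volume := by
      exact (continuous_id.mul continuous_const).integrableOn_Ioc
    have hgI : IntegrableOn (fun x => x * C1 + L2 x * (1 / 2)) (Ioc (0:ℝ) 1) volume :=
      Integrable.add hxc (hL2i.mul_const _)
    calc (∫ x in Ioc (0:ℝ) 1, ∫ y in Ioc (0:ℝ) 1,
          ((∫ t in (0:ℝ)..x, W1 (t, y)) ^ 2 + (∫ t in (0:ℝ)..y, W2 (x, t)) ^ 2))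
        ≤ ∫ x in Ioc (0:ℝ) 1, (x * C1 + L2 x * (1 / 2)) :=
          setIntegral_mono_on hinneri hgI measurableSet_Ioc key_inner
      _ = (1 / 2) * C1 + (1 / 2) * C2 := by
          rw [integral_add hxc (hL2i.mul_const _), MeasureTheory.integral_mul_const,
            MeasureTheory.integral_mul_const]
          have : ∫ x in Ioc (0:ℝ) 1, x = 1 / 2 := by
            rw [← intervalIntegral.integral_of_le zero_le_one, integral_id]
            norm_num
          rw [this, hC2def]
          ring
  -- Fubini for C1
  have hfub : C1 = ∫ x in Ioc (0:ℝ) 1, ∫ y in Ioc (0:ℝ) 1, W1 (x, y) ^ 2 := by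
    have hint : Integrable (Function.uncurry fun t y => W1 (t, y) ^ 2)
        ((volume.restrict (Ioc (0:ℝ) 1)).prod (volume.restrict (Ioc (0:ℝ) 1))) := by
      have huc : (Function.uncurry fun t y => W1 (t, y) ^ 2) = fun z => W1 z ^ 2 := by
        ext z
        simp [Function.uncurry]
      rw [huc]
      refine (integrable_const (M1 ^ 2)).mono'
        ((h1.pow_const 2).aestronglyMeasurable) ?_
      filter_upwards with z
      rw [Real.norm_eq_abs, abs_of_nonneg (sq_nonneg _)]
      exact hsq _ _ (hM1 z)
    have := MeasureTheory.integral_integral_swap hint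
    rw [hC1def]
    exact this.symm
  -- split the right-hand side
  have hsplit : (∫ x in Ioc (0:ℝ) 1, ∫ y in Ioc (0:ℝ) 1, (W1 (x, y) ^ 2 + W2 (x, y) ^ 2))
      = (∫ x in Ioc (0:ℝ) 1, ∫ y in Ioc (0:ℝ) 1, W1 (x, y) ^ 2) + C2 := by
    have h1i : ∀ x : ℝ, IntegrableOn (fun y => W1 (x, y) ^ 2) (Ioc (0:ℝ) 1) volume := by
      intro x
      exact integrableOn_Ioc01_of_bdd
        (((h1.comp (measurable_const.prodMk measurable_id)).pow_const 2)).aestronglyMeasurable.restrict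
        (c := M1 ^ 2) (fun y _ => by
          rw [abs_of_nonneg (sq_nonneg _)]; exact hsq _ _ (hM1 (x, y)))
    have h2i : ∀ x : ℝ, IntegrableOn (fun y => W2 (x, y) ^ 2) (Ioc (0:ℝ) 1) volume := by
      intro x
      exact integrableOn_Ioc01_of_bdd
        (((h2.comp (measurable_const.prodMk measurable_id)).pow_const 2)).aestronglyMeasurable.restrict
        (c := M2 ^ 2) (fun y _ => by
          rw [abs_of_nonneg (sq_nonneg _)]; exact hsq _ _ (hM2 (x, y)))
    have hinner : ∀ x : ℝ, (∫ y in Ioc (0:ℝ) 1, (W1 (x, y) ^ 2 + W2 (x, y) ^ 2))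
        = (∫ y in Ioc (0:ℝ) 1, W1 (x, y) ^ 2) + L2 x := fun x =>
      integral_add (h1i x) (h2i x)
    have hAm : IntegrableOn (fun x => ∫ y in Ioc (0:ℝ) 1, W1 (x, y) ^ 2)
        (Ioc (0:ℝ) 1) volume := by
      refine integrableOn_Ioc01_of_bdd
        (((h1.pow_const 2).stronglyMeasurable.integral_prod_right').aestronglyMeasurable.restrict)
        (c := M1 ^ 2) ?_
      intro x _
      have hnn : 0 ≤ ∫ y in Ioc (0:ℝ) 1, W1 (x, y) ^ 2 :=
        integral_nonneg fun y => sq_nonneg _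
      rw [abs_of_nonneg hnn]
      have := norm_setIntegral_le_of_norm_le_const (μ := volume) hDlt
        (C := M1 ^ 2) (f := fun y => W1 (x, y) ^ 2)
        (fun y _ => by
          rw [Real.norm_eq_abs, abs_of_nonneg (sq_nonneg _)]; exact hsq _ _ (hM1 (x, y)))
      rw [measureReal_def, hDone, mul_one, Real.norm_eq_abs] at this
      exact (le_abs_self _).trans this
    calc (∫ x in Ioc (0:ℝ) 1, ∫ y in Ioc (0:ℝ) 1, (W1 (x, y) ^ 2 + W2 (x, y) ^ 2))
        = ∫ x in Ioc (0:ℝ) 1, ((∫ y in Ioc (0:ℝ) 1, W1 (x, y) ^ 2) + L2 x) := by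
          exact setIntegral_congr_fun measurableSet_Ioc fun x _ => hinner x
      _ = (∫ x in Ioc (0:ℝ) 1, ∫ y in Ioc (0:ℝ) 1, W1 (x, y) ^ 2) + C2 := by
          rw [integral_add hAm hL2i, hC2def]
  -- conclude
  rw [intervalIntegral.integral_of_le zero_le_one, intervalIntegral.integral_of_le zero_le_one]
  have e1 : (∫ x in Ioc (0:ℝ) 1, ∫ y in (0:ℝ)..1,
      ((∫ t in (0:ℝ)..x, W1 (t, y)) ^ 2 + (∫ t in (0:ℝ)..y, W2 (x, t)) ^ 2))
      = ∫ x in Ioc (0:ℝ) 1, ∫ y in Ioc (0:ℝ) 1,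
      ((∫ t in (0:ℝ)..x, W1 (t, y)) ^ 2 + (∫ t in (0:ℝ)..y, W2 (x, t)) ^ 2) :=
    setIntegral_congr_fun measurableSet_Ioc fun x _ =>
      intervalIntegral.integral_of_le zero_le_one
  have e2 : (∫ x in Ioc (0:ℝ) 1, ∫ y in (0:ℝ)..1, (W1 (x, y) ^ 2 + W2 (x, y) ^ 2))
      = ∫ x in Ioc (0:ℝ) 1, ∫ y in Ioc (0:ℝ) 1, (W1 (x, y) ^ 2 + W2 (x, y) ^ 2) :=
    setIntegral_congr_fun measurableSet_Ioc fun x _ =>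
      intervalIntegral.integral_of_le zero_le_one
  rw [e1, e2, hsplit, ← hfub]
  linarith [key_outer]

lemma intervalIntegral_congr_Ioc_offFinite {f g : ℝ → ℝ} {s : Set ℝ} (hs : s.Finite)
    {a b : ℝ} (hab : a ≤ b) (h : ∀ t ∈ Ioc a b, t ∉ s → f t = g t) :
    ∫ t in a..b, f t = ∫ t in a..b, g t := by
  apply intervalIntegral.integral_congr_ae
  have h0 : volume s = 0 := hs.measure_zero _
  have hae : ∀ᵐ t : ℝ, t ∉ s := by
    rw [ae_iff]
    simpa using h0
  filter_upwards [hae] with t ht htm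
  rw [Set.uIoc_of_le hab] at htm
  exact h t htm ht

lemma Ix_subset_Ioo {N i : ℕ} (hN : 0 < N) (hi : i < N) {x : ℝ} (hx : x ∈ Ix N i) :
    x ∈ Ioo (0:ℝ) 1 := by
  have hNR : (0:ℝ) < N := by exact_mod_cast hN
  obtain ⟨h1, h2⟩ := hx
  constructor
  · exact lt_of_le_of_lt (by positivity) h1
  · have : ((i:ℝ) + 1) / N ≤ 1 := by
      rw [div_le_one hNR]
      exact_mod_cast hi
    exact h2.trans_le this


set_option maxHeartbeats 1000000

/-- For every `v ∈ V_k(𝒯_h)` the diagonal tensor `τ = diag(τ₁₁, τ₂₂)` obtained by directional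
integration, `τ₁₁(x,y) = ∫₀ˣ v₁(t,y) dt` and `τ₂₂(x,y) = ∫₀ʸ v₂(x,t) dt`, satisfies
`div τ = v` (elementwise) and `‖τ‖²_{H(div,Ω)} ≤ (3/2) ‖v‖²_{L²(Ω)}`. -/
theorem diagonal_tensor_construction (k N : ℕ) (hk : 1 ≤ k) (hN : 0 < N)
    (v1 v2 : ℝ → ℝ → ℝ) (hv : meshVk k N v1 v2) :
    ∃ t11 t22 : ℝ → ℝ → ℝ,
      (∀ x y : ℝ, t11 x y = ∫ t in (0 : ℝ)..x, v1 t y) ∧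
      (∀ x y : ℝ, t22 x y = ∫ t in (0 : ℝ)..y, v2 x t) ∧
      (∀ i j : ℕ, i < N → j < N → ∀ x ∈ Ix N i, ∀ y ∈ Ix N j,
        HasDerivAt (fun t => t11 t y) (v1 x y) x ∧
        HasDerivAt (fun t => t22 x t) (v2 x y) y) ∧
      (∫ x in (0 : ℝ)..1, ∫ y in (0 : ℝ)..1, ((t11 x y) ^ 2 + (t22 x y) ^ 2)) +
          (∫ x in (0 : ℝ)..1, ∫ y in (0 : ℝ)..1, ((v1 x y) ^ 2 + (v2 x y) ^ 2)) ≤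
        (3 / 2) * ∫ x in (0 : ℝ)..1, ∫ y in (0 : ℝ)..1, ((v1 x y) ^ 2 + (v2 x y) ^ 2) := by
  have hv' : ∀ i j : ℕ, ∃ P1 P2 : MvPolynomial (Fin 2) ℝ, ∀ x y : ℝ,
      i < N → j < N → x ∈ Ix N i → y ∈ Ix N j →
      v1 x y = ev2 P1 x y ∧ v2 x y = ev2 P2 x y := by
    intro i j
    by_cases hij : i < N ∧ j < N
    · obtain ⟨P1, P2, -, h⟩ := hv i j hij.1 hij.2
      exact ⟨P1, P2, fun x y _ _ hx hy => h x y hx hy⟩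
    · exact ⟨0, 0, fun x y hi hj _ _ => absurd ⟨hi, hj⟩ hij⟩
  choose Q1 Q2 hQ using hv'
  obtain ⟨M1, hM1⟩ := Wfun_bdd N hN Q1
  obtain ⟨M2, hM2⟩ := Wfun_bdd N hN Q2
  have hg1 : Measurable fun z : ℝ × ℝ => Wfun N Q1 z.1 z.2 := Wfun_measurable N Q1
  have hg2 : Measurable fun z : ℝ × ℝ => Wfun N Q2 z.1 z.2 := Wfun_measurable N Q2
  have hB : (gridSet N).Finite := gridSet_finite N
  have hveq : ∀ {x y : ℝ}, (∃ i, i < N ∧ x ∈ Ix N i) → (∃ j, j < N ∧ y ∈ Ix N j) →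
      v1 x y = Wfun N Q1 x y ∧ v2 x y = Wfun N Q2 x y := by
    rintro x y ⟨i, hi, hxi⟩ ⟨j, hj, hyj⟩
    rw [Wfun_eq hN Q1 hi hj hxi hyj, Wfun_eq hN Q2 hi hj hxi hyj]
    exact hQ i j x y hi hj hxi hyj
  have hcell : ∀ x ∈ Ioc (0:ℝ) 1, x ∉ gridSet N → ∃ i, i < N ∧ x ∈ Ix N i := by
    intro x hx hxg
    obtain ⟨i, hi, h⟩ := offgrid_mem hN hx hxg
    exact ⟨i, hi, h⟩
  refine ⟨fun x y => ∫ t in (0:ℝ)..x, v1 t y, fun x y => ∫ t in (0:ℝ)..y, v2 x t,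
    fun _ _ => rfl, fun _ _ => rfl, ?_, ?_⟩
  · intro i j hi hj x hx y hy
    have hxcell : ∃ i', i' < N ∧ x ∈ Ix N i' := ⟨i, hi, hx⟩
    have hycell : ∃ j', j' < N ∧ y ∈ Ix N j' := ⟨j, hj, hy⟩
    have hxo : x ∈ Ioo (0:ℝ) 1 := Ix_subset_Ioo hN hi hx
    have hyo : y ∈ Ioo (0:ℝ) 1 := Ix_subset_Ioo hN hj hy
    constructor
    · beta_reduce
      have hsec : Measurable fun t => Wfun N Q1 t y :=
        hg1.comp (measurable_id.prodMk measurable_const :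
          Measurable fun t : ℝ => (t, y))
      have hii : IntervalIntegrable (fun t => Wfun N Q1 t y) volume 0 x :=
        intervalIntegrable_of_bdd hsec (fun t => hM1 t y) 0 x
      have hca : ContinuousAt (fun t => Wfun N Q1 t y) x := by
        have hev : (fun t => Wfun N Q1 t y) =ᶠ[nhds x] fun t => ev2 (Q1 i j) t y := by
          filter_upwards [isOpen_Ioo.mem_nhds hx] with t ht
          exact Wfun_eq hN Q1 hi hj ht hy
        refine ContinuousAt.congr ?_ hev.symm
        exact ((continuous_ev2 (Q1 i j)).comp
          (continuous_id.prodMk continuous_const)).continuousAt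
      have hW : HasDerivAt (fun u => ∫ t in (0:ℝ)..u, Wfun N Q1 t y)
          (Wfun N Q1 x y) x :=
        intervalIntegral.integral_hasDerivAt_right hii
          hsec.aestronglyMeasurable.stronglyMeasurableAtFilter hca
      have hveq1 : v1 x y = Wfun N Q1 x y := (hveq hxcell hycell).1
      rw [hveq1]
      refine hW.congr_of_eventuallyEq ?_
      filter_upwards [isOpen_Ioo.mem_nhds hxo] with u hu
      refine intervalIntegral_congr_Ioc_offFinite hB (le_of_lt hu.1) ?_
      intro t ht htg
      exact (hveq (hcell t ⟨ht.1, ht.2.trans (le_of_lt hu.2)⟩ htg) hycell).1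
    · beta_reduce
      have hsec : Measurable fun t => Wfun N Q2 x t :=
        hg2.comp (measurable_const.prodMk measurable_id :
          Measurable fun t : ℝ => (x, t))
      have hii : IntervalIntegrable (fun t => Wfun N Q2 x t) volume 0 y :=
        intervalIntegrable_of_bdd hsec (fun t => hM2 x t) 0 y
      have hca : ContinuousAt (fun t => Wfun N Q2 x t) y := by
        have hev : (fun t => Wfun N Q2 x t) =ᶠ[nhds y] fun t => ev2 (Q2 i j) x t := by
          filter_upwards [isOpen_Ioo.mem_nhds hy] with t ht
          exact Wfun_eq hN Q2 hi hj hx ht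
        refine ContinuousAt.congr ?_ hev.symm
        exact ((continuous_ev2 (Q2 i j)).comp
          (continuous_const.prodMk continuous_id)).continuousAt
      have hW : HasDerivAt (fun u => ∫ t in (0:ℝ)..u, Wfun N Q2 x t)
          (Wfun N Q2 x y) y :=
        intervalIntegral.integral_hasDerivAt_right hii
          hsec.aestronglyMeasurable.stronglyMeasurableAtFilter hca
      have hveq2 : v2 x y = Wfun N Q2 x y := (hveq hxcell hycell).2
      rw [hveq2]
      refine hW.congr_of_eventuallyEq ?_
      filter_upwards [isOpen_Ioo.mem_nhds hyo] with u hu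
      refine intervalIntegral_congr_Ioc_offFinite hB (le_of_lt hu.1) ?_
      intro t ht htg
      exact (hveq hxcell (hcell t ⟨ht.1, ht.2.trans (le_of_lt hu.2)⟩ htg)).2
  · beta_reduce
    have hIeq : (∫ x in (0:ℝ)..1, ∫ y in (0:ℝ)..1, ((v1 x y) ^ 2 + (v2 x y) ^ 2))
        = ∫ x in (0:ℝ)..1, ∫ y in (0:ℝ)..1,
            ((Wfun N Q1 x y) ^ 2 + (Wfun N Q2 x y) ^ 2) := by
      refine intervalIntegral_congr_Ioc_offFinite hB zero_le_one ?_
      intro x hx hxg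
      refine intervalIntegral_congr_Ioc_offFinite hB zero_le_one ?_
      intro y hy hyg
      obtain ⟨e1, e2⟩ := hveq (hcell x hx hxg) (hcell y hy hyg)
      rw [e1, e2]
    have hAeq : (∫ x in (0:ℝ)..1, ∫ y in (0:ℝ)..1,
          ((∫ t in (0:ℝ)..x, v1 t y) ^ 2 + (∫ t in (0:ℝ)..y, v2 x t) ^ 2))
        = ∫ x in (0:ℝ)..1, ∫ y in (0:ℝ)..1,
          ((∫ t in (0:ℝ)..x, Wfun N Q1 t y) ^ 2
            + (∫ t in (0:ℝ)..y, Wfun N Q2 x t) ^ 2) := by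
      refine intervalIntegral_congr_Ioc_offFinite hB zero_le_one ?_
      intro x hx hxg
      refine intervalIntegral_congr_Ioc_offFinite hB zero_le_one ?_
      intro y hy hyg
      have e1 : (∫ t in (0:ℝ)..x, v1 t y) = ∫ t in (0:ℝ)..x, Wfun N Q1 t y := by
        refine intervalIntegral_congr_Ioc_offFinite hB (le_of_lt hx.1) ?_
        intro t ht htg
        exact (hveq (hcell t ⟨ht.1, ht.2.trans hx.2⟩ htg) (hcell y hy hyg)).1
      have e2 : (∫ t in (0:ℝ)..y, v2 x t) = ∫ t in (0:ℝ)..y, Wfun N Q2 x t := by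
        refine intervalIntegral_congr_Ioc_offFinite hB (le_of_lt hy.1) ?_
        intro t ht htg
        exact (hveq (hcell x hx hxg) (hcell t ⟨ht.1, ht.2.trans hy.2⟩ htg)).2
      rw [e1, e2]
    have hcore := core_ineq hg1 hg2 (M1 := M1) (M2 := M2)
      (fun z => hM1 z.1 z.2) (fun z => hM2 z.1 z.2)
    beta_reduce at hcore
    rw [hAeq, hIeq]
    linarith [hcore]
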